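/- If the inter-request time distribution has a continuously differentiable hazard rate that is strictly increasing, then for the cost function C(t*) = R(1 - F(t*)) + t* - \int_0^{t*} F(t) dt, every interior critical point (where R = (1 - F(t*))/f(t*)) is a local maximum; hence the infimum of C over [0, \infty] is attained at t* = 0 or in the limit t* \to \infty. -/

import Mathlib

/-- If the inter-request time distribution (density `f`, CDF
`F x = ∫_0^x f`) has a continuously differentiable, strictly increasing hazard
rate `f t / (1 - F t)`, then for the cost function
`C t = R (1 - F t) + t - ∫_0^t F`, every interior critical point (where
`R f t = 1 - F t`, i.e. `R = (1 - F t)/f t`) is a local maximum; hence the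
infimum of `C` over `[0, ∞)` is attained at `t = 0` or in the limit
`t → ∞`. -/
theorem increasing_hazard_local_max (R : ℝ) (hR : 0 < R) (f F : ℝ → ℝ)
    (hf : ContDiff ℝ 1 f) (hfpos : ∀ t, 0 < f t)
    (hF : ∀ x, F x = ∫ t in (0:ℝ)..x, f t)
    (hFlt : ∀ t, F t < 1)
    (hhaz : StrictMonoOn (fun t => f t / (1 - F t)) (Set.Ici 0))
    (C : ℝ → ℝ)
    (hC : ∀ t, C t = R * (1 - F t) + t - ∫ s in (0:ℝ)..t, F s) :
    (∀ t, 0 < t → R * f t = 1 - F t → IsLocalMax C t) ∧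
    sInf (C '' Set.Ici 0) = min (C 0) (Filter.liminf C Filter.atTop) := by
  have hfc : Continuous f := hf.continuous
  have hFpos : ∀ t, 0 < 1 - F t := fun t => by linarith [hFlt t]
  -- derivative of F
  have hFd : ∀ x, HasDerivAt F (f x) x := by
    intro x
    have h1 : HasDerivAt (fun u => ∫ t in (0:ℝ)..u, f t) (f x) x :=
      intervalIntegral.integral_hasDerivAt_right (hfc.intervalIntegrable 0 x)
        (hfc.stronglyMeasurableAtFilter _ _) hfc.continuousAt
    exact h1.congr_of_eventuallyEq (Filter.Eventually.of_forall hF)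
  have hFcont : Continuous F := by
    have : Differentiable ℝ F := fun x => (hFd x).differentiableAt
    exact this.continuous
  have hF0 : F 0 = 0 := by rw [hF]; simp
  have hGd : ∀ x, HasDerivAt (fun u => ∫ s in (0:ℝ)..u, F s) (F x) x := fun x =>
    intervalIntegral.integral_hasDerivAt_right (hFcont.intervalIntegrable 0 x)
      (hFcont.stronglyMeasurableAtFilter _ _) hFcont.continuousAt
  -- derivative of C
  have hCd : ∀ x, HasDerivAt C (1 - F x - R * f x) x := by
    intro x
    have hA : HasDerivAt (fun t => R * (1 - F t)) (R * (0 - f x)) x :=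
      ((hasDerivAt_const x (1:ℝ)).sub (hFd x)).const_mul R
    have h1 := (hA.add (hasDerivAt_id x)).sub (hGd x)
    have h2 : HasDerivAt (fun t => R * (1 - F t) + t - ∫ s in (0:ℝ)..t, F s)
        (1 - F x - R * f x) x := by exact h1.congr_deriv (by ring)
    exact h2.congr_of_eventuallyEq (Filter.Eventually.of_forall hC)
  have hCderiv : ∀ x, deriv C x = 1 - F x - R * f x := fun x => (hCd x).deriv
  have hCcont : Continuous C := by
    have : Differentiable ℝ C := fun x => (hCd x).differentiableAt
    exact this.continuous
  -- hazard comparison in product form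
  have hhaz' : ∀ s t : ℝ, 0 ≤ s → s < t → f s * (1 - F t) < f t * (1 - F s) := by
    intro s t hs hst
    have := hhaz (Set.mem_Ici.mpr hs) (Set.mem_Ici.mpr (hs.trans hst.le)) hst
    exact (div_lt_div_iff₀ (hFpos s) (hFpos t)).mp this
  -- C is monotone on [0,a] if R f a ≤ 1 - F a
  have monoOn : ∀ a : ℝ, 0 ≤ a → R * f a ≤ 1 - F a → MonotoneOn C (Set.Icc 0 a) := by
    intro a ha hfa
    apply (strictMonoOn_of_deriv_pos (convex_Icc 0 a) hCcont.continuousOn ?_).monotoneOn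
    intro x hx
    rw [interior_Icc] at hx
    rw [hCderiv x]
    have h1 := hhaz' x a hx.1.le hx.2
    nlinarith [hFpos a, hFpos x, hfpos x, hfpos a]
  -- C is antitone on [a,∞) if 1 - F a ≤ R f a
  have antiOn : ∀ a : ℝ, 0 ≤ a → 1 - F a ≤ R * f a → AntitoneOn C (Set.Ici a) := by
    intro a ha hfa
    apply (strictAntiOn_of_deriv_neg (convex_Ici a) hCcont.continuousOn ?_).antitoneOn
    intro x hx
    rw [interior_Ici] at hx
    rw [hCderiv x]
    have h1 := hhaz' a x ha hx
    nlinarith [hFpos a, hFpos x, hfpos x, hfpos a]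
  have hC0 : C 0 = R := by rw [hC]; simp [hF0]
  have hSne : (C '' Set.Ici 0).Nonempty := ⟨C 0, 0, Set.self_mem_Ici, rfl⟩
  constructor
  · -- part 1: local max at interior critical points
    intro t ht hcrit
    have hmono := monoOn t ht.le hcrit.le
    have hanti := antiOn t ht.le hcrit.ge
    have hmem : Set.Ioi (0:ℝ) ∈ nhds t := isOpen_Ioi.mem_nhds ht
    filter_upwards [hmem] with x hx
    rcases le_total x t with h | h
    · exact hmono ⟨hx.le, h⟩ ⟨le_refl 0 |>.trans ht.le, le_refl t⟩ h
    · exact hanti Set.self_mem_Ici (Set.mem_Ici.mpr h) h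
  · -- part 2
    -- exponential domination of the survival function
    have hc0 : 0 < f 0 := hfpos 0
    have hexp : ∀ t : ℝ, 0 ≤ t → 1 - F t ≤ Real.exp (-(f 0) * t) := by
      intro t ht
      have hψd : ∀ x : ℝ, HasDerivAt (fun u => Real.exp (f 0 * u) * (1 - F u))
          (Real.exp (f 0 * x) * (f 0 * (1 - F x) - f x)) x := by
        intro x
        have he : HasDerivAt (fun u : ℝ => Real.exp (f 0 * u))
            (Real.exp (f 0 * x) * f 0) x := by
          have h1 := ((hasDerivAt_id x).const_mul (f 0)).exp
          simp only [id_eq] at h1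
          convert h1 using 1
          ring
        have h2 := he.mul ((hasDerivAt_const x (1:ℝ)).sub (hFd x))
        exact h2.congr_deriv (by simp only [Pi.sub_apply]; ring)
      have hanti : AntitoneOn (fun u => Real.exp (f 0 * u) * (1 - F u)) (Set.Ici 0) := by
        apply antitoneOn_of_deriv_nonpos (convex_Ici 0)
        · exact ((Real.continuous_exp.comp (continuous_const.mul continuous_id)).mul
            (continuous_const.sub hFcont)).continuousOn
        · intro x _; exact (hψd x).differentiableAt.differentiableWithinAt
        · intro x hx
          rw [interior_Ici] at hx
          rw [(hψd x).deriv]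
          have hz := hhaz Set.self_mem_Ici (Set.mem_Ici.mpr hx.le) hx
          simp only [hF0, sub_zero, div_one] at hz
          have hlt : f 0 * (1 - F x) < f x := (lt_div_iff₀ (hFpos x)).mp hz
          nlinarith [Real.exp_pos (f 0 * x)]
      have h1 : Real.exp (f 0 * t) * (1 - F t) ≤ 1 := by
        have := hanti Set.self_mem_Ici (Set.mem_Ici.mpr ht) ht
        simpa [hF0] using this
      rw [neg_mul, Real.exp_neg]
      have he := Real.exp_pos (f 0 * t)
      have hinv : Real.exp (f 0 * t) * (Real.exp (f 0 * t))⁻¹ = 1 :=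
        mul_inv_cancel₀ he.ne'
      nlinarith
    -- uniform upper bound for C on [0,∞)
    have hCbound : ∀ t : ℝ, 0 ≤ t → C t ≤ R + 1 / f 0 := by
      intro t ht
      have hFt0 : 0 ≤ F t := by
        rw [hF]
        exact intervalIntegral.integral_nonneg ht (fun s _ => (hfpos s).le)
      have hint : (t - ∫ s in (0:ℝ)..t, F s) = ∫ s in (0:ℝ)..t, (1 - F s) := by
        rw [intervalIntegral.integral_sub (intervalIntegrable_const)
          (hFcont.intervalIntegrable 0 t)]
        simp
      have hmono1 : (∫ s in (0:ℝ)..t, (1 - F s)) ≤ ∫ s in (0:ℝ)..t, Real.exp (-(f 0) * s) := by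
        apply intervalIntegral.integral_mono_on ht
        · exact (continuous_const.sub hFcont).intervalIntegrable 0 t
        · exact (Real.continuous_exp.comp (continuous_const.mul continuous_id)).intervalIntegrable 0 t
        · intro s hs; exact hexp s hs.1
      have hexpint : (∫ s in (0:ℝ)..t, Real.exp (-(f 0) * s))
          = (1 - Real.exp (-(f 0) * t)) / f 0 := by
        have hd : ∀ s ∈ Set.uIcc (0:ℝ) t,
            HasDerivAt (fun u => -Real.exp (-(f 0) * u) / f 0) (Real.exp (-(f 0) * s)) s := by
          intro s _
          have h1 := ((hasDerivAt_id s).const_mul (-(f 0))).exp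
          have h2 := (h1.div_const (f 0)).neg
          simp only [id_eq] at h2
          refine HasDerivAt.congr_of_eventuallyEq (h2.congr_deriv ?_) (Filter.Eventually.of_forall fun u => ?_)
          · field_simp
          · show _ = -(_ / _); ring
        rw [intervalIntegral.integral_eq_sub_of_hasDerivAt hd
          ((Real.continuous_exp.comp (continuous_const.mul continuous_id)).intervalIntegrable 0 t)]
        norm_num
        ring
      have hexpt : 0 < Real.exp (-(f 0) * t) := Real.exp_pos _
      have : C t = R * (1 - F t) + (t - ∫ s in (0:ℝ)..t, F s) := by rw [hC]; ring
      rw [this, hint]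
      have h3 : (∫ s in (0:ℝ)..t, (1 - F s)) ≤ 1 / f 0 := by
        rw [hexpint] at hmono1
        have h4 : (1 - Real.exp (-(f 0) * t)) / f 0 ≤ 1 / f 0 := by
          gcongr
          linarith
        linarith
      nlinarith [hFt0]
    -- the two cases
    by_cases hA : ∀ t : ℝ, 0 ≤ t → R * f t < 1 - F t
    · -- C is increasing on [0,∞)
      have hmono : MonotoneOn C (Set.Ici 0) := by
        apply (strictMonoOn_of_deriv_pos (convex_Ici 0) hCcont.continuousOn ?_).monotoneOn
        intro x hx
        rw [interior_Ici] at hx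
        rw [hCderiv x]
        linarith [hA x hx.le]
      have hlb : ∀ y ∈ C '' Set.Ici 0, C 0 ≤ y := by
        rintro y ⟨t, ht, rfl⟩
        exact hmono Set.self_mem_Ici ht ht
      have hinf : sInf (C '' Set.Ici 0) = C 0 :=
        le_antisymm (csInf_le ⟨C 0, fun y hy => hlb y hy⟩ ⟨0, Set.self_mem_Ici, rfl⟩)
          (le_csInf hSne hlb)
      rw [hinf]
      rw [min_eq_left]
      apply Filter.le_liminf_of_le
      · apply Filter.isCoboundedUnder_ge_of_eventually_le Filter.atTop (x := R + 1 / f 0)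
        filter_upwards [Filter.eventually_ge_atTop (0:ℝ)] with t ht
        exact hCbound t ht
      · filter_upwards [Filter.eventually_ge_atTop (0:ℝ)] with t ht
        exact hmono Set.self_mem_Ici ht ht
    · push_neg at hA
      obtain ⟨t₁, ht₁0, ht₁⟩ := hA
      have hanti : AntitoneOn C (Set.Ici t₁) := antiOn t₁ ht₁0 ht₁
      have hdich : ∀ t : ℝ, 0 ≤ t → C 0 ≤ C t ∨ AntitoneOn C (Set.Ici t) := by
        intro t ht
        by_cases h : R * f t < 1 - F t
        · exact Or.inl ((monoOn t ht h.le) ⟨le_refl 0, ht⟩ ⟨ht, le_refl t⟩ ht)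
        · exact Or.inr (antiOn t ht (not_lt.mp h))
      by_cases hB : BddBelow (C '' Set.Ici 0)
      · have hTne : (C '' Set.Ici t₁).Nonempty := ⟨C t₁, t₁, Set.self_mem_Ici, rfl⟩
        have hTsub : C '' Set.Ici t₁ ⊆ C '' Set.Ici 0 :=
          Set.image_mono (Set.Ici_subset_Ici.mpr ht₁0)
        have hTb : BddBelow (C '' Set.Ici t₁) := hB.mono hTsub
        set L := sInf (C '' Set.Ici t₁) with hLdef
        have hLle : ∀ t : ℝ, t₁ ≤ t → L ≤ C t := fun t ht => csInf_le hTb ⟨t, ht, rfl⟩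
        have hliminf : Filter.liminf C Filter.atTop = L := by
          apply le_antisymm
          · apply le_of_forall_pos_le_add
            intro ε hε
            obtain ⟨x, ⟨s, hs, rfl⟩, hx⟩ := exists_lt_of_csInf_lt hTne
              (lt_add_of_pos_right L hε)
            apply Filter.liminf_le_of_frequently_le
            · apply Filter.Eventually.frequently
              filter_upwards [Filter.eventually_ge_atTop s] with t ht
              exact le_trans (hanti hs (le_trans hs ht) ht) hx.le
            · refine ⟨L, ?_⟩
              rw [Filter.eventually_map]
              filter_upwards [Filter.eventually_ge_atTop t₁] with u hu
              exact hLle u hu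
          · apply Filter.le_liminf_of_le
            · apply Filter.isCoboundedUnder_ge_of_eventually_le Filter.atTop (x := C t₁)
              filter_upwards [Filter.eventually_ge_atTop t₁] with t ht
              exact hanti Set.self_mem_Ici ht ht
            · filter_upwards [Filter.eventually_ge_atTop t₁] with t ht
              exact hLle t ht
        rw [hliminf]
        apply le_antisymm
        · exact le_min (csInf_le hB ⟨0, Set.self_mem_Ici, rfl⟩)
            (csInf_le_csInf hB hTne hTsub)
        · apply le_csInf hSne
          rintro y ⟨t, ht, rfl⟩
          rcases hdich t ht with h | h
          · exact le_trans (min_le_left _ _) h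
          · have h1 : C (max t t₁) ≤ C t :=
              h Set.self_mem_Ici (Set.mem_Ici.mpr (le_max_left t t₁)) (le_max_left t t₁)
            exact le_trans (min_le_right _ _) (le_trans (hLle _ (le_max_right t t₁)) h1)
      · -- C is unbounded below
        have hfreq : ∀ a : ℝ, ¬ (∀ᶠ t in Filter.atTop, a ≤ C t) := by
          intro a ha
          obtain ⟨T, hT⟩ := Filter.eventually_atTop.mp ha
          apply hB
          refine ⟨min (C 0) a, ?_⟩
          rintro y ⟨t, ht, rfl⟩
          rcases hdich t ht with h | h
          · exact le_trans (min_le_left _ _) h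
          · have h1 : C (max t T) ≤ C t :=
              h Set.self_mem_Ici (Set.mem_Ici.mpr (le_max_left t T)) (le_max_left t T)
            exact le_trans (min_le_right _ _) (le_trans (hT _ (le_max_right t T)) h1)
        have hliminf0 : Filter.liminf C Filter.atTop = 0 := by
          rw [Filter.liminf_eq]
          have hempty : { a : ℝ | ∀ᶠ n in Filter.atTop, a ≤ C n } = ∅ := by
            rw [Set.eq_empty_iff_forall_notMem]
            exact hfreq
          rw [hempty, Real.sSup_empty]
        rw [Real.sInf_of_not_bddBelow hB, hliminf0, hC0]
        exact (min_eq_right hR.le).symm
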